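/- Suppose nmExt : ({0,1}^n)^s → {0,1}^m is an s-source non-malleable extractor with error ε for min-entropy k. Then for any k' ≥ k, nmExt is a strong s-source non-malleable extractor for min-entropy k' with error 2^{2m}·(ε + 2^{k+1−k'}). -/

import Mathlib

open Finset Real

/-- Bit strings of length `n`. -/
abbrev BS (n : ℕ) := Fin n → Bool

noncomputable section

/-- `p` is a probability distribution on the finite type `α`. -/
def IsDist {α : Type*} [Fintype α] (p : α → ℝ) : Prop :=
  (∀ x, 0 ≤ p x) ∧ ∑ x, p x = 1

/-- Statistical distance between two distributions on a finite type. -/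
def statDist {α : Type*} [Fintype α] (p q : α → ℝ) : ℝ :=
  (∑ x, |p x - q x|) / 2

/-- Pushforward of a distribution along a function. -/
def distMap {α β : Type*} [Fintype α] [DecidableEq β] (f : α → β) (p : α → ℝ) : β → ℝ :=
  fun y => ∑ x ∈ Finset.univ.filter (fun x => f x = y), p x

/-- Product (independent joint) distribution. -/
def distProd {α β : Type*} (p : α → ℝ) (q : β → ℝ) : α × β → ℝ :=
  fun z => p z.1 * q z.2

/-- Product of finitely many distributions (mutually independent joint distribution). -/
def distPi {ι : Type*} {α : ι → Type*} [Fintype ι] (p : ∀ i, α i → ℝ) : (∀ i, α i) → ℝ :=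
  fun x => ∏ i, p i (x i)

/-- The uniform distribution on a finite type. -/
def unifDist (α : Type*) [Fintype α] : α → ℝ :=
  fun _ => (Fintype.card α : ℝ)⁻¹

/-- `p` has min-entropy at least `k`, i.e. every point has probability at most `2 ^ (-k)`. -/
def MinEntropyGE {α : Type*} (p : α → ℝ) (k : ℝ) : Prop :=
  ∀ x, p x ≤ (2:ℝ) ^ (-k)

/-- `nmExt` is an `s`-source non-malleable extractor with error `ε` for min-entropy `k`. -/
def IsNMsExt {n m : ℕ} (s : ℕ) (nmExt : (Fin s → BS n) → BS m) (k ε : ℝ) : Prop :=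
  ∀ p : Fin s → (BS n → ℝ), (∀ i, IsDist (p i)) → (∀ i, MinEntropyGE (p i) k) →
    ∀ f : Fin s → (BS n → BS n), (∃ i, ∀ x, f i x ≠ x) →
      statDist
        (distMap (fun x : Fin s → BS n => (nmExt x, nmExt (fun i => f i (x i))))
          (distPi p))
        (distProd (unifDist (BS m))
          (distMap (fun x : Fin s → BS n => nmExt (fun i => f i (x i))) (distPi p)))
      ≤ ε

/-- `nmExt` is a strong `s`-source non-malleable extractor with error `ε` for
min-entropy `k`: in addition to being non-malleable, for every index `i₀` the output is
close to uniform even given the tampered output and the `i₀`-th source. -/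
def IsStrongNMsExt {n m : ℕ} (s : ℕ) (nmExt : (Fin s → BS n) → BS m) (k ε : ℝ) : Prop :=
  IsNMsExt s nmExt k ε ∧
  ∀ p : Fin s → (BS n → ℝ), (∀ i, IsDist (p i)) → (∀ i, MinEntropyGE (p i) k) →
    ∀ f : Fin s → (BS n → BS n), (∃ i, ∀ x, f i x ≠ x) →
      ∀ i₀ : Fin s,
        statDist
          (distMap (fun x : Fin s → BS n => (nmExt x, nmExt (fun i => f i (x i)), x i₀))
            (distPi p))
          (distProd (unifDist (BS m))
            (distMap (fun x : Fin s → BS n => (nmExt (fun i => f i (x i)), x i₀))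
              (distPi p)))
        ≤ ε

/-! ### Auxiliary lemmas -/

lemma statDist_nonneg' {α : Type*} [Fintype α] (p q : α → ℝ) : 0 ≤ statDist p q := by
  unfold statDist
  positivity

lemma sum_distMap' {α β : Type*} [Fintype α] [Fintype β] [DecidableEq β]
    (F : α → β) (p : α → ℝ) : ∑ y, distMap F p y = ∑ x, p x := by
  unfold distMap
  rw [Finset.sum_fiberwise_eq_sum_filter]
  simp

lemma isDist_distMap {α β : Type*} [Fintype α] [Fintype β] [DecidableEq β]
    (F : α → β) {p : α → ℝ} (hp : IsDist p) : IsDist (distMap F p) :=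
  ⟨fun _ => Finset.sum_nonneg fun x _ => hp.1 x, by rw [sum_distMap']; exact hp.2⟩

lemma isDist_distPi {ι : Type*} [Fintype ι] [DecidableEq ι] {κ : ι → Type*}
    [∀ i, Fintype (κ i)] {p : ∀ i, κ i → ℝ} (hp : ∀ i, IsDist (p i)) :
    IsDist (distPi p) := by
  constructor
  · exact fun v => Finset.prod_nonneg fun i _ => (hp i).1 (v i)
  · unfold distPi
    rw [← Fintype.piFinset_univ, ← Finset.prod_univ_sum]
    exact Finset.prod_eq_one fun i _ => (hp i).2

lemma isDist_distProd {α β : Type*} [Fintype α] [Fintype β] {p : α → ℝ} {q : β → ℝ}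
    (hp : IsDist p) (hq : IsDist q) : IsDist (distProd p q) := by
  constructor
  · exact fun z => mul_nonneg (hp.1 _) (hq.1 _)
  · unfold distProd
    rw [Fintype.sum_prod_type]
    simp only [← Finset.mul_sum, hq.2, mul_one]
    exact hp.2

lemma isDist_unifDist (α : Type*) [Fintype α] [Nonempty α] : IsDist (unifDist α) := by
  constructor
  · intro x; unfold unifDist; positivity
  · unfold unifDist
    rw [Finset.sum_const, Finset.card_univ, nsmul_eq_mul, mul_inv_cancel₀]
    exact_mod_cast Fintype.card_ne_zero

lemma abs_sub_le_statDist {α : Type*} [Fintype α] [DecidableEq α] {p q : α → ℝ}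
    (hp : ∑ x, p x = 1) (hq : ∑ x, q x = 1) (w : α) :
    |p w - q w| ≤ statDist p q := by
  have h0 : ∑ x, (p x - q x) = 0 := by
    rw [Finset.sum_sub_distrib, hp, hq]; ring
  have h1 : ∑ x ∈ Finset.univ.erase w, (p x - q x) = -(p w - q w) := by
    have hsplit := Finset.add_sum_erase Finset.univ (fun x => p x - q x) (Finset.mem_univ w)
    linarith
  have h2 : |∑ x ∈ Finset.univ.erase w, (p x - q x)|
      ≤ ∑ x ∈ Finset.univ.erase w, |p x - q x| := Finset.abs_sum_le_sum_abs _ _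
  rw [h1, abs_neg] at h2
  have h3 : |p w - q w| + ∑ x ∈ Finset.univ.erase w, |p x - q x| = ∑ x, |p x - q x| :=
    Finset.add_sum_erase Finset.univ (fun x => |p x - q x|) (Finset.mem_univ w)
  unfold statDist
  linarith

/-- Marginal of a product distribution. -/
lemma distPi_marginal {n s : ℕ} (p : Fin s → BS n → ℝ) (hd : ∀ i, IsDist (p i))
    (i₀ : Fin s) (x : BS n) :
    ∑ v ∈ Finset.univ.filter (fun v : Fin s → BS n => v i₀ = x), distPi p v = p i₀ x := by
  rw [Finset.sum_filter]
  have hpt : ∀ v : Fin s → BS n, (if v i₀ = x then distPi p v else 0)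
      = ∏ i, (if i = i₀ then (if v i = x then p i (v i) else 0) else p i (v i)) := by
    intro v
    rw [← Finset.mul_prod_erase Finset.univ _ (Finset.mem_univ i₀)]
    rw [if_pos rfl]
    have he : ∏ i ∈ Finset.univ.erase i₀,
        (if i = i₀ then (if v i = x then p i (v i) else 0) else p i (v i))
        = ∏ i ∈ Finset.univ.erase i₀, p i (v i) :=
      Finset.prod_congr rfl fun i hi => if_neg (Finset.ne_of_mem_erase hi)
    rw [he]
    unfold distPi
    rw [← Finset.mul_prod_erase Finset.univ (fun i => p i (v i)) (Finset.mem_univ i₀)]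
    by_cases hv : v i₀ = x
    · simp [hv]
    · simp [hv]
  rw [Finset.sum_congr rfl fun v _ => hpt v]
  rw [← Fintype.piFinset_univ, ← Finset.prod_univ_sum (fun _ : Fin s => (Finset.univ : Finset (BS n)))
    (fun i y => if i = i₀ then (if y = x then p i y else 0) else p i y)]
  rw [Finset.prod_eq_single i₀]
  · simp
  · intro i _ hi
    simp only [if_neg hi]
    exact (hd i).2
  · simp

/-- Summing a product distribution over a fiber set, with the `i₀` coordinate restricted to
`B`, equals `t` times the corresponding sum for the tilted distribution. -/
lemma tilt_sum {n s : ℕ} (p : Fin s → BS n → ℝ) (i₀ : Fin s) (B : Finset (BS n))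
    (t : ℝ) (ht : t ≠ 0) (hB : ∑ x ∈ B, p i₀ x = t) (V : Finset (Fin s → BS n)) :
    ∑ x ∈ B, ∑ v ∈ V.filter (fun v => v i₀ = x), distPi p v
      = t * ∑ v ∈ V,
          distPi (Function.update p i₀ (fun y => if y ∈ B then p i₀ y / t else 0)) v := by
  rw [Finset.sum_fiberwise_eq_sum_filter V B (fun v => v i₀) (distPi p)]
  rw [Finset.mul_sum, Finset.sum_filter]
  apply Finset.sum_congr rfl
  intro v _
  set g : BS n → ℝ := fun y => if y ∈ B then p i₀ y / t else 0 with hg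
  have h1 : distPi (Function.update p i₀ g) v
      = g (v i₀) * ∏ i ∈ Finset.univ.erase i₀, p i (v i) := by
    unfold distPi
    rw [← Finset.mul_prod_erase Finset.univ _ (Finset.mem_univ i₀), Function.update_self]
    congr 1
    exact Finset.prod_congr rfl fun i hi => by
      rw [Function.update_of_ne (Finset.ne_of_mem_erase hi)]
  have h2 : distPi p v = p i₀ (v i₀) * ∏ i ∈ Finset.univ.erase i₀, p i (v i) :=
    (Finset.mul_prod_erase Finset.univ _ (Finset.mem_univ i₀)).symm
  rw [h1, h2]
  by_cases hv : v i₀ ∈ B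
  · rw [if_pos hv, hg]
    simp only [if_pos hv]
    field_simp
  · rw [if_neg hv, hg]
    simp [if_neg hv]


/-- Key bound: over any subset `B` of values of the `i₀`-th source, the accumulated signed
deviation at a fixed output pair `(z, z')` is at most `ε + 2 ^ (k - k')`. -/
lemma key_bound {n m s : ℕ} (nmExt : (Fin s → BS n) → BS m) (k ε k' : ℝ)
    (h : IsNMsExt s nmExt k ε) (hk : k' ≥ k)
    (p : Fin s → (BS n → ℝ)) (hd : ∀ i, IsDist (p i)) (hme : ∀ i, MinEntropyGE (p i) k')
    (f : Fin s → (BS n → BS n)) (hf : ∃ i, ∀ x, f i x ≠ x) (i₀ : Fin s)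
    (z z' : BS m) (B : Finset (BS n)) :
    |∑ x ∈ B,
        (distMap (fun v : Fin s → BS n => (nmExt v, nmExt (fun i => f i (v i)), v i₀))
            (distPi p) (z, z', x)
          - unifDist (BS m) z *
            distMap (fun v : Fin s → BS n => (nmExt (fun i => f i (v i)), v i₀))
              (distPi p) (z', x))|
      ≤ ε + (2:ℝ) ^ (k - k') := by
  have hme' : ∀ i, MinEntropyGE (p i) k := fun i x => (hme i x).trans
    (Real.rpow_le_rpow_of_exponent_le one_le_two (by linarith))
  have heps : 0 ≤ ε := (statDist_nonneg' _ _).trans (h p hd hme' f hf)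
  have hc : (0:ℝ) < (2:ℝ) ^ (k - k') := Real.rpow_pos_of_pos two_pos _
  have hdPi : IsDist (distPi p) := isDist_distPi hd
  set u : ℝ := unifDist (BS m) z with hu
  have hu0 : (0:ℝ) ≤ u := by rw [hu]; unfold unifDist; positivity
  have hu1 : u ≤ 1 := by
    rw [hu]; unfold unifDist
    apply inv_le_one_of_one_le₀
    exact_mod_cast Fintype.card_pos
  set A : BS n → ℝ := fun x =>
    distMap (fun v : Fin s → BS n => (nmExt v, nmExt (fun i => f i (v i)), v i₀))
      (distPi p) (z, z', x) with hA
  set C : BS n → ℝ := fun x =>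
    distMap (fun v : Fin s → BS n => (nmExt (fun i => f i (v i)), v i₀))
      (distPi p) (z', x) with hC
  have hA0 : ∀ x, 0 ≤ A x := fun x => Finset.sum_nonneg fun v _ => hdPi.1 v
  have hC0 : ∀ x, 0 ≤ C x := fun x => Finset.sum_nonneg fun v _ => hdPi.1 v
  have hAC : ∀ x, A x ≤ C x := by
    intro x
    apply Finset.sum_le_sum_of_subset_of_nonneg _ fun v _ _ => hdPi.1 v
    intro v hv
    simp only [Finset.mem_filter, Prod.ext_iff] at hv ⊢
    tauto
  have hCp : ∀ x, C x ≤ p i₀ x := by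
    intro x
    rw [← distPi_marginal p hd i₀ x]
    apply Finset.sum_le_sum_of_subset_of_nonneg _ fun v _ _ => hdPi.1 v
    intro v hv
    simp only [Finset.mem_filter, Prod.ext_iff] at hv ⊢
    tauto
  have habs : ∀ x, |A x - u * C x| ≤ p i₀ x := by
    intro x
    rw [abs_le]
    constructor
    · nlinarith [hA0 x, hC0 x, hAC x, hCp x]
    · nlinarith [hA0 x, hC0 x, hAC x, hCp x]
  set t : ℝ := ∑ x ∈ B, p i₀ x with ht
  have ht0 : 0 ≤ t := Finset.sum_nonneg fun x _ => (hd i₀).1 x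
  by_cases hcase : t ≤ (2:ℝ) ^ (k - k')
  · calc |∑ x ∈ B, (A x - u * C x)| ≤ ∑ x ∈ B, |A x - u * C x| :=
          Finset.abs_sum_le_sum_abs _ _
      _ ≤ ∑ x ∈ B, p i₀ x := Finset.sum_le_sum fun x _ => habs x
      _ = t := ht.symm
      _ ≤ ε + (2:ℝ) ^ (k - k') := by linarith
  · push_neg at hcase
    have htpos : 0 < t := lt_trans hc hcase
    set g : BS n → ℝ := fun y => if y ∈ B then p i₀ y / t else 0 with hg
    set p' : Fin s → BS n → ℝ := Function.update p i₀ g with hp'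
    have hgd : IsDist g := by
      constructor
      · intro y
        rw [hg]
        dsimp only
        split_ifs
        · exact div_nonneg ((hd i₀).1 y) ht0
        · exact le_refl 0
      · rw [hg]
        dsimp only
        rw [Finset.sum_ite_mem, Finset.univ_inter, ← Finset.sum_div, ← ht,
          div_self (ne_of_gt htpos)]
    have hd' : ∀ i, IsDist (p' i) := by
      intro i
      by_cases hi : i = i₀
      · subst hi; rw [hp', Function.update_self]; exact hgd
      · rw [hp', Function.update_of_ne hi]; exact hd i
    have hme2 : ∀ i, MinEntropyGE (p' i) k := by
      intro i x
      by_cases hi : i = i₀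
      · rw [hi, hp', Function.update_self, hg]
        dsimp only
        split_ifs with hx
        · have h1 : p i₀ x / t ≤ (2:ℝ) ^ (-k') / (2:ℝ) ^ (k - k') := by
            apply div_le_div₀ (Real.rpow_nonneg (by norm_num) _) (hme i₀ x) hc hcase.le
          have h2 : (2:ℝ) ^ (-k') / (2:ℝ) ^ (k - k') = (2:ℝ) ^ (-k) := by
            rw [← Real.rpow_sub two_pos]
            ring_nf
          rw [h2] at h1
          exact h1
        · exact (Real.rpow_pos_of_pos two_pos _).le
      · rw [hp', Function.update_of_ne hi]; exact hme' i x
    have hdPi' : IsDist (distPi p') := isDist_distPi hd'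
    have hh := h p' hd' hme2 f hf
    have hptw := abs_sub_le_statDist
      (isDist_distMap (fun v : Fin s → BS n => (nmExt v, nmExt (fun i => f i (v i))))
        hdPi').2
      (isDist_distProd (isDist_unifDist (BS m))
        (isDist_distMap (fun v : Fin s → BS n => nmExt (fun i => f i (v i))) hdPi')).2
      (z, z')
    have hpt : |distMap (fun v : Fin s → BS n => (nmExt v, nmExt (fun i => f i (v i))))
          (distPi p') (z, z')
        - u * distMap (fun v : Fin s → BS n => nmExt (fun i => f i (v i)))
            (distPi p') z'| ≤ ε := by
      have h3 := le_trans hptw hh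
      simpa [distProd, hu] using h3
    have hI1 : ∑ x ∈ B, A x
        = t * distMap (fun v : Fin s → BS n => (nmExt v, nmExt (fun i => f i (v i))))
            (distPi p') (z, z') := by
      have e1 : ∀ x : BS n, A x = ∑ v ∈ (Finset.univ.filter
          (fun v : Fin s → BS n => nmExt v = z ∧ nmExt (fun i => f i (v i)) = z')).filter
            (fun v => v i₀ = x), distPi p v := by
        intro x
        rw [hA]
        unfold distMap
        rw [Finset.filter_filter]
        refine Finset.sum_congr (Finset.filter_congr fun v _ => ?_) fun _ _ => rfl
        simp [Prod.ext_iff, and_assoc]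
      rw [Finset.sum_congr rfl fun x _ => e1 x, tilt_sum p i₀ B t (ne_of_gt htpos) ht.symm]
      congr 1
      unfold distMap
      refine Finset.sum_congr (Finset.filter_congr fun v _ => ?_) fun _ _ => rfl
      simp [Prod.ext_iff]
    have hI2 : ∑ x ∈ B, C x
        = t * distMap (fun v : Fin s → BS n => nmExt (fun i => f i (v i)))
            (distPi p') z' := by
      have e1 : ∀ x : BS n, C x = ∑ v ∈ (Finset.univ.filter
          (fun v : Fin s → BS n => nmExt (fun i => f i (v i)) = z')).filter
            (fun v => v i₀ = x), distPi p v := by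
        intro x
        rw [hC]
        unfold distMap
        rw [Finset.filter_filter]
        refine Finset.sum_congr (Finset.filter_congr fun v _ => ?_) fun _ _ => rfl
        simp [Prod.ext_iff]
      rw [Finset.sum_congr rfl fun x _ => e1 x, tilt_sum p i₀ B t (ne_of_gt htpos) ht.symm,
        hp']
      rfl
    have hsum : ∑ x ∈ B, (A x - u * C x)
        = t * (distMap (fun v : Fin s → BS n => (nmExt v, nmExt (fun i => f i (v i))))
              (distPi p') (z, z')
            - u * distMap (fun v : Fin s → BS n => nmExt (fun i => f i (v i)))
                (distPi p') z') := by
      rw [Finset.sum_sub_distrib, hI1, ← Finset.mul_sum, hI2]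
      ring
    have ht1 : t ≤ 1 := by
      have hsub := Finset.sum_le_sum_of_subset_of_nonneg (Finset.subset_univ B)
        (fun x _ _ => (hd i₀).1 x)
      rw [(hd i₀).2] at hsub
      exact hsub
    rw [hsum, abs_mul, abs_of_nonneg ht0]
    calc t * |_| ≤ 1 * ε := mul_le_mul ht1 hpt (abs_nonneg _) zero_le_one
      _ ≤ ε + (2:ℝ) ^ (k - k') := by linarith

theorem stmt9 {n m s : ℕ} (nmExt : (Fin s → BS n) → BS m) (k ε k' : ℝ)
    (h : IsNMsExt s nmExt k ε) (hk : k' ≥ k) :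
    IsStrongNMsExt s nmExt k' ((2:ℝ) ^ (2 * m) * (ε + (2:ℝ) ^ (k + 1 - k'))) := by
  have hc : (0:ℝ) < (2:ℝ) ^ (k - k') := Real.rpow_pos_of_pos two_pos _
  have hm1 : (1:ℝ) ≤ (2:ℝ) ^ (2 * m) := one_le_pow₀ one_le_two
  have h2c : (2:ℝ) ^ (k + 1 - k') = 2 * (2:ℝ) ^ (k - k') := by
    rw [show k + 1 - k' = (k - k') + 1 by ring, Real.rpow_add two_pos, Real.rpow_one]
    ring
  constructor
  · intro p hd hme f hf
    have hme' : ∀ i, MinEntropyGE (p i) k := fun i x => (hme i x).trans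
      (Real.rpow_le_rpow_of_exponent_le one_le_two (by linarith))
    have h1 := h p hd hme' f hf
    have h0 := statDist_nonneg'
      (distMap (fun x : Fin s → BS n => (nmExt x, nmExt (fun i => f i (x i)))) (distPi p))
      (distProd (unifDist (BS m))
        (distMap (fun x : Fin s → BS n => nmExt (fun i => f i (x i))) (distPi p)))
    rw [h2c]
    nlinarith
  · intro p hd hme f hf i₀
    have hme' : ∀ i, MinEntropyGE (p i) k := fun i x => (hme i x).trans
      (Real.rpow_le_rpow_of_exponent_le one_le_two (by linarith))
    have heps : 0 ≤ ε := (statDist_nonneg' _ _).trans (h p hd hme' f hf)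
    set P : BS m × BS m × BS n → ℝ :=
      distMap (fun x : Fin s → BS n => (nmExt x, nmExt (fun i => f i (x i)), x i₀))
        (distPi p) with hP
    set Q : BS m × BS m × BS n → ℝ :=
      distProd (unifDist (BS m))
        (distMap (fun x : Fin s → BS n => (nmExt (fun i => f i (x i)), x i₀))
          (distPi p)) with hQ
    have hzz : ∀ z z' : BS m, ∑ x : BS n, |P (z, z', x) - Q (z, z', x)|
        ≤ 2 * (ε + (2:ℝ) ^ (k - k')) := by
      intro z z'
      set a : BS n → ℝ := fun x => P (z, z', x) - Q (z, z', x) with ha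
      have hQval : ∀ x : BS n, Q (z, z', x) = unifDist (BS m) z *
          distMap (fun v : Fin s → BS n => (nmExt (fun i => f i (v i)), v i₀))
            (distPi p) (z', x) := fun x => rfl
      have hkey : ∀ B : Finset (BS n), |∑ x ∈ B, a x| ≤ ε + (2:ℝ) ^ (k - k') := by
        intro B
        have hkb := key_bound nmExt k ε k' h hk p hd hme f hf i₀ z z' B
        simpa [ha, hP, hQval] using hkb
      have hsplit : ∑ x : BS n, |a x|
          = (∑ x ∈ Finset.univ.filter (fun x => 0 ≤ a x), a x)
            - ∑ x ∈ Finset.univ.filter (fun x => ¬ 0 ≤ a x), a x := by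
        rw [← Finset.sum_filter_add_sum_filter_not Finset.univ (fun x => 0 ≤ a x)
          (fun x => |a x|)]
        rw [Finset.sum_congr rfl (fun x hx => abs_of_nonneg (Finset.mem_filter.1 hx).2)]
        rw [sub_eq_add_neg, ← Finset.sum_neg_distrib]
        congr 1
        apply Finset.sum_congr rfl
        intro x hx
        rw [abs_of_neg (lt_of_not_ge (Finset.mem_filter.1 hx).2)]
      have hb1 := hkey (Finset.univ.filter (fun x => 0 ≤ a x))
      have hb2 := hkey (Finset.univ.filter (fun x => ¬ 0 ≤ a x))
      have hl1 := le_abs_self (∑ x ∈ Finset.univ.filter (fun x => 0 ≤ a x), a x)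
      have hl2 := neg_le_abs (∑ x ∈ Finset.univ.filter (fun x => ¬ 0 ≤ a x), a x)
      rw [hsplit]
      linarith
    unfold statDist
    have hexp : ∑ w : BS m × BS m × BS n, |P w - Q w|
        = ∑ z : BS m, ∑ z' : BS m, ∑ x : BS n, |P (z, z', x) - Q (z, z', x)| := by
      rw [Fintype.sum_prod_type]
      refine Finset.sum_congr rfl fun z _ => ?_
      rw [Fintype.sum_prod_type]
    rw [hexp]
    have hbd : ∑ z : BS m, ∑ z' : BS m, ∑ x : BS n, |P (z, z', x) - Q (z, z', x)|
        ≤ ∑ _z : BS m, ∑ _z' : BS m, 2 * (ε + (2:ℝ) ^ (k - k')) :=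
      Finset.sum_le_sum fun z _ => Finset.sum_le_sum fun z' _ => hzz z z'
    have hconst : ∑ _z : BS m, ∑ _z' : BS m, 2 * (ε + (2:ℝ) ^ (k - k'))
        = ((2:ℝ) ^ m * (2:ℝ) ^ m) * (2 * (ε + (2:ℝ) ^ (k - k'))) := by
      rw [Finset.sum_const, Finset.sum_const, Finset.card_univ, nsmul_eq_mul, nsmul_eq_mul]
      have hcard : (Fintype.card (BS m) : ℝ) = (2:ℝ) ^ m := by
        rw [Fintype.card_fun]
        push_cast
        norm_num
      rw [hcard]
      ring
    rw [hconst] at hbd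
    have hpow : (2:ℝ) ^ m * (2:ℝ) ^ m = (2:ℝ) ^ (2 * m) := by
      rw [← pow_add]
      ring_nf
    rw [hpow] at hbd
    have hpow0 : (0:ℝ) < (2:ℝ) ^ (2 * m) := by positivity
    rw [h2c]
    nlinarith
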